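/- Pushforwards of couplings are exactly the couplings of the pushforwards: if X, Y are Polish spaces with Borel probability measures μ_X, μ_Y, and f : X → ℝ, g : Y → ℝ are Borel measurable, then the map T(x,y) = (f(x), g(y)) satisfies T_*C(μ_X, μ_Y) = C(f_*μ_X, g_*μ_Y), i.e. every coupling of f_*μ_X and g_*μ_Y arises as T_*μ for some coupling μ of μ_X and μ_Y. -/

import Mathlib

open MeasureTheory ENNReal
open scoped ProbabilityTheory

/-- The set of couplings between two measures: probability-type measures on the product
with the prescribed marginals. -/
def Coupling {X Y : Type*} [MeasurableSpace X] [MeasurableSpace Y]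
    (μX : Measure X) (μY : Measure Y) : Set (Measure (X × Y)) :=
  {μ | μ.fst = μX ∧ μ.snd = μY}

/-- The `p`-distortion of a coupling `μ` between two measure networks, namely
`‖ω_X - ω_Y‖_{L^p(μ ⊗ μ)}` (for `p = ∞` this is the essential supremum). -/
noncomputable def dis {X Y : Type*} [MeasurableSpace X] [MeasurableSpace Y]
    (ωX : X × X → ℝ) (ωY : Y × Y → ℝ) (p : ℝ≥0∞) (μ : Measure (X × Y)) : ℝ≥0∞ :=
  eLpNorm (fun q : (X × Y) × (X × Y) => ωX (q.1.1, q.2.1) - ωY (q.1.2, q.2.2)) p (μ.prod μ)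

/-- The network Gromov–Wasserstein distance: half the infimal `p`-distortion over couplings. -/
noncomputable def dN {X Y : Type*} [MeasurableSpace X] [MeasurableSpace Y]
    (ωX : X × X → ℝ) (ωY : Y × Y → ℝ) (p : ℝ≥0∞) (μX : Measure X) (μY : Measure Y) : ℝ≥0∞ :=
  (1 / 2) * ⨅ μ ∈ Coupling μX μY, dis ωX ωY p μ

/-- Disintegration: for a probability measure `μ` on a standard Borel space and a measurable
`f : Ω → ℝ`, there is a Markov kernel `κ` (conditional law given `f`) whose average over
`μ.map f` is `μ`, and such that `(κ a).map f = dirac a` a.e. -/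
lemma exists_condKernel_dirac {Ω : Type*} [MeasurableSpace Ω] [StandardBorelSpace Ω]
    [Nonempty Ω] (μ : Measure Ω) [IsProbabilityMeasure μ] (f : Ω → ℝ) (hf : Measurable f) :
    ∃ κ : ProbabilityTheory.Kernel ℝ Ω, ProbabilityTheory.IsMarkovKernel κ ∧
      (∀ s : Set Ω, MeasurableSet s → ∫⁻ a, κ a s ∂(μ.map f) = μ s) ∧
      (∀ᵐ a ∂(μ.map f), (κ a).map f = Measure.dirac a) := by
  set ρ : Measure (ℝ × Ω) := μ.map (fun x => (f x, x)) with hρdef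
  have hmeas : Measurable (fun x : Ω => (f x, x)) := hf.prodMk measurable_id
  have : IsProbabilityMeasure ρ := Measure.isProbabilityMeasure_map hmeas.aemeasurable
  have hfst : ρ.fst = μ.map f := Measure.fst_map_prodMk measurable_id
  refine ⟨ρ.condKernel, inferInstance, ?_, ?_⟩
  · intro s hs
    have hdis : ρ.fst ⊗ₘ ρ.condKernel = ρ := ρ.disintegrate _
    calc ∫⁻ a, ρ.condKernel a s ∂(μ.map f)
        = ∫⁻ a, ρ.condKernel a (Prod.mk a ⁻¹' (Prod.snd ⁻¹' s)) ∂ρ.fst := by rw [hfst]; rfl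
      _ = (ρ.fst ⊗ₘ ρ.condKernel) (Prod.snd ⁻¹' s) :=
          (Measure.compProd_apply (measurable_snd hs)).symm
      _ = ρ (Prod.snd ⁻¹' s) := by rw [hdis]
      _ = μ s := by rw [hρdef, Measure.map_apply hmeas (measurable_snd hs)]; rfl
  · have hdis : ρ.fst ⊗ₘ ρ.condKernel = ρ := ρ.disintegrate _
    have ht : MeasurableSet {p : ℝ × Ω | f p.2 = p.1} :=
      measurableSet_eq_fun (hf.comp measurable_snd) measurable_fst
    have hρt : ρ {p : ℝ × Ω | f p.2 = p.1}ᶜ = 0 := by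
      rw [hρdef, Measure.map_apply hmeas ht.compl]
      convert measure_empty (μ := μ)
      ext x; simp
    have h0 : ∫⁻ a, ρ.condKernel a (Prod.mk a ⁻¹' {p : ℝ × Ω | f p.2 = p.1}ᶜ) ∂ρ.fst = 0 := by
      rw [← Measure.compProd_apply ht.compl, hdis, hρt]
    have hae : ∀ᵐ a ∂ρ.fst,
        ρ.condKernel a (Prod.mk a ⁻¹' {p : ℝ × Ω | f p.2 = p.1}ᶜ) = 0 := by
      rw [lintegral_eq_zero_iff
        (ProbabilityTheory.Kernel.measurable_kernel_prodMk_left ht.compl)] at h0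
      exact h0
    rw [hfst] at hae
    filter_upwards [hae] with a ha
    have ha' : ρ.condKernel a {x : Ω | f x ≠ a} = 0 := ha
    ext s hs
    rw [Measure.map_apply hf hs, Measure.dirac_apply' _ hs]
    by_cases has : a ∈ s
    · rw [Set.indicator_of_mem has]
      have hc : ρ.condKernel a (f ⁻¹' s)ᶜ = 0 := by
        refine measure_mono_null ?_ ha'
        intro x hx hfx
        exact hx (show f x ∈ s by rw [hfx]; exact has)
      simp only [Pi.one_apply]
      rw [← prob_compl_eq_zero_iff (hf hs)]
      exact hc
    · rw [Set.indicator_of_notMem has]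
      refine measure_mono_null ?_ ha'
      intro x hx hfx
      exact has (hfx ▸ hx)

/-- **Pushforwards of couplings are exactly couplings of the pushforwards**: for Polish
spaces `X`, `Y` with Borel probability measures and Borel measurable `f : X → ℝ`,
`g : Y → ℝ`, the map `T(x,y) = (f x, g y)` satisfies
`T_* C(μX, μY) = C(f_* μX, g_* μY)`. -/
theorem map_couplings_eq_couplings_map
    {X Y : Type*} [TopologicalSpace X] [PolishSpace X] [MeasurableSpace X] [BorelSpace X]
    [TopologicalSpace Y] [PolishSpace Y] [MeasurableSpace Y] [BorelSpace Y]
    (μX : Measure X) (μY : Measure Y) [IsProbabilityMeasure μX] [IsProbabilityMeasure μY]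
    (f : X → ℝ) (g : Y → ℝ) (hf : Measurable f) (hg : Measurable g) :
    (fun μ : Measure (X × Y) => μ.map (Prod.map f g)) '' Coupling μX μY
      = Coupling (μX.map f) (μY.map g) := by
  have : Nonempty X := μX.nonempty_of_neZero
  have : Nonempty Y := μY.nonempty_of_neZero
  ext ν
  constructor
  · rintro ⟨μ, ⟨h1, h2⟩, rfl⟩
    constructor
    · show (μ.map (Prod.map f g)).map Prod.fst = μX.map f
      rw [Measure.map_map measurable_fst (hf.prodMap hg),
        show (Prod.fst ∘ Prod.map f g : X × Y → ℝ) = f ∘ Prod.fst from rfl,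
        ← Measure.map_map hf measurable_fst]
      exact congrArg _ h1
    · show (μ.map (Prod.map f g)).map Prod.snd = μY.map g
      rw [Measure.map_map measurable_snd (hf.prodMap hg),
        show (Prod.snd ∘ Prod.map f g : X × Y → ℝ) = g ∘ Prod.snd from rfl,
        ← Measure.map_map hg measurable_snd]
      exact congrArg _ h2
  · rintro ⟨hν1, hν2⟩
    have hPfst : IsProbabilityMeasure ν.fst := by
      rw [hν1]; exact Measure.isProbabilityMeasure_map hf.aemeasurable
    have : IsProbabilityMeasure ν := by
      constructor
      have h := hPfst.measure_univ
      rwa [Measure.fst_apply MeasurableSet.univ, Set.preimage_univ] at h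
    obtain ⟨κ, hκM, hκmarg, hκdir⟩ := exists_condKernel_dirac μX f hf
    obtain ⟨η, hηM, hηmarg, hηdir⟩ := exists_condKernel_dirac μY g hg
    set ξ : ProbabilityTheory.Kernel (ℝ × ℝ) (X × Y) :=
      (κ.comap Prod.fst measurable_fst).prod (η.comap Prod.snd measurable_snd) with hξdef
    have hξ : ∀ p : ℝ × ℝ, ξ p = (κ p.1).prod (η p.2) := by
      intro p
      rw [hξdef, ProbabilityTheory.Kernel.prod_apply, ProbabilityTheory.Kernel.comap_apply,
        ProbabilityTheory.Kernel.comap_apply]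
    refine ⟨ν.bind ξ, ⟨?_, ?_⟩, ?_⟩
    · ext s hs
      rw [Measure.fst_apply hs,
        Measure.bind_apply (measurable_fst hs) (ProbabilityTheory.Kernel.measurable ξ).aemeasurable]
      have : ∀ p : ℝ × ℝ, ξ p (Prod.fst ⁻¹' s) = κ p.1 s := by
        intro p
        rw [hξ, ← Set.prod_univ, Measure.prod_prod, measure_univ, mul_one]
      simp_rw [this]
      rw [← hκmarg s hs, ← hν1, Measure.fst,
        lintegral_map (ProbabilityTheory.Kernel.measurable_coe κ hs) measurable_fst]
    · ext s hs
      rw [Measure.snd_apply hs,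
        Measure.bind_apply (measurable_snd hs) (ProbabilityTheory.Kernel.measurable ξ).aemeasurable]
      have : ∀ p : ℝ × ℝ, ξ p (Prod.snd ⁻¹' s) = η p.2 s := by
        intro p
        rw [hξ, ← Set.univ_prod, Measure.prod_prod, measure_univ, one_mul]
      simp_rw [this]
      rw [← hηmarg s hs, ← hν2, Measure.snd,
        lintegral_map (ProbabilityTheory.Kernel.measurable_coe η hs) measurable_snd]
    · have hdir1 : ∀ᵐ p : ℝ × ℝ ∂ν, (κ p.1).map f = Measure.dirac p.1 := by
        have h := hκdir
        rw [← hν1] at h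
        exact ae_of_ae_map measurable_fst.aemeasurable h
      have hdir2 : ∀ᵐ p : ℝ × ℝ ∂ν, (η p.2).map g = Measure.dirac p.2 := by
        have h := hηdir
        rw [← hν2] at h
        exact ae_of_ae_map measurable_snd.aemeasurable h
      ext s hs
      rw [Measure.map_apply (hf.prodMap hg) hs,
        Measure.bind_apply ((hf.prodMap hg) hs) (ProbabilityTheory.Kernel.measurable ξ).aemeasurable]
      have heq : ∀ᵐ p : ℝ × ℝ ∂ν, ξ p (Prod.map f g ⁻¹' s) = s.indicator 1 p := by
        filter_upwards [hdir1, hdir2] with p h1 h2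
        rw [hξ, ← Measure.map_apply (hf.prodMap hg) hs, ← Measure.map_prod_map _ _ hf hg,
          h1, h2, Measure.dirac_prod_dirac, Measure.dirac_apply' _ hs]
      rw [lintegral_congr_ae heq, lintegral_indicator_one hs]
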